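/- Let p ∈ [0,1] and consider the two-qubit matrix ρ̃ = (1/4)·(I₄ + (3/5)p·(σ₁⊗σ₁ − σ₂⊗σ₂ + σ₃⊗σ₃)). Then ρ̃^{T₂} fails to be positive semidefinite (equivalently, ρ̃ is entangled) if and only if p > 5/9. Hence the Werner state can be broadcast via nonlocal optimal cloning exactly when 5/9 < p ≤ 1. -/

import Mathlib

open Matrix Kronecker
open scoped ComplexOrder

/-- The three Pauli matrices. -/
noncomputable def pauli : Fin 3 → Matrix (Fin 2) (Fin 2) ℂ :=
  ![!![0, 1; 1, 0], !![0, -Complex.I; Complex.I, 0], !![1, 0; 0, -1]]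

/-- Partial transpose on the second qubit:
`(ρ^{T₂})_{(i,μ),(j,ν)} = ρ_{(i,ν),(j,μ)}`. -/
noncomputable def ptranspose (ρ : Matrix (Fin 2 × Fin 2) (Fin 2 × Fin 2) ℂ) :
    Matrix (Fin 2 × Fin 2) (Fin 2 × Fin 2) ℂ :=
  Matrix.of fun p q => ρ (p.1, q.2) (q.1, p.2)

set_option maxHeartbeats 1600000 in
/-- The clone output `ρ̃₁₂ = {0, 0, (3/5)T}` of the Buzek–Hillery nonlocal
optimal cloner applied to the Werner state (correlation matrix `T = diag(p, −p, p)`) has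
non-positive-semidefinite partial transpose (i.e. is entangled) iff `p > 5/9`; hence the
Werner state can be broadcast via nonlocal optimal cloning exactly when `5/9 < p ≤ 1`. -/
theorem werner_broadcasting_range_nonlocal (p : ℝ) (hp0 : 0 ≤ p) (hp1 : p ≤ 1) :
    ¬ (ptranspose ((1/4 : ℂ) • ((1 : Matrix (Fin 2 × Fin 2) (Fin 2 × Fin 2) ℂ)
        + ((3/5 * p : ℝ) : ℂ) • (pauli 0 ⊗ₖ pauli 0 - pauli 1 ⊗ₖ pauli 1
            + pauli 2 ⊗ₖ pauli 2)))).PosSemidef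
    ↔ 5/9 < p := by
  constructor
  · -- ¬ PSD → 5/9 < p : contrapositive, show PSD when p ≤ 5/9
    intro h
    by_contra hlt
    push_neg at hlt
    apply h
    refine Matrix.PosSemidef.of_dotProduct_mulVec_nonneg ?_ ?_
    · -- Hermitian
      ext ⟨i, μ⟩ ⟨j, ν⟩
      fin_cases i <;> fin_cases μ <;> fin_cases j <;> fin_cases ν <;>
        simp [ptranspose, pauli, Matrix.conjTranspose_apply, Matrix.one_apply, Prod.ext_iff,
          Fin.ext_iff, Complex.ext_iff] <;> norm_num
    · intro x
      simp only [dotProduct, mulVec, Fintype.sum_prod_type, Fin.sum_univ_two, ptranspose,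
        Matrix.of_apply, Matrix.smul_apply, Matrix.add_apply, Matrix.sub_apply, Matrix.one_apply,
        kroneckerMap_apply, pauli, Pi.star_apply]
      simp only [Matrix.cons_val', Matrix.cons_val_zero, Matrix.cons_val_one, Matrix.cons_val_two, Matrix.tail_cons, Matrix.head_cons,
        Matrix.empty_val', Matrix.cons_val_fin_one, Matrix.head_fin_const]
      norm_num [Prod.ext_iff, Fin.ext_iff]
      set u := x (0, 0)
      set v := x (0, 1)
      set w := x (1, 0)
      set z := x (1, 1)
      rw [Complex.le_def]
      simp only [Complex.add_re, Complex.mul_re, Complex.mul_im, Complex.add_im, Complex.conj_re,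
        Complex.conj_im, Complex.ofReal_re, Complex.ofReal_im, Complex.zero_re, Complex.zero_im,
        Complex.one_re, Complex.one_im, Complex.neg_re, Complex.neg_im]
      norm_num
      constructor
      · nlinarith [sq_nonneg (v.re - w.re), sq_nonneg (v.im - w.im), sq_nonneg (v.re + w.re),
          sq_nonneg (v.im + w.im), sq_nonneg u.re, sq_nonneg u.im, sq_nonneg z.re, sq_nonneg z.im,
          mul_nonneg hp0 (sq_nonneg (v.re - w.re)), mul_nonneg hp0 (sq_nonneg (v.im - w.im)),
          mul_nonneg hp0 (sq_nonneg (v.re + w.re)), mul_nonneg hp0 (sq_nonneg (v.im + w.im)),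
          mul_nonneg (sub_nonneg.2 hlt) (sq_nonneg v.re), mul_nonneg (sub_nonneg.2 hlt) (sq_nonneg v.im),
          mul_nonneg (sub_nonneg.2 hlt) (sq_nonneg w.re), mul_nonneg (sub_nonneg.2 hlt) (sq_nonneg w.im),
          mul_nonneg hp0 (sq_nonneg u.re), mul_nonneg hp0 (sq_nonneg u.im),
          mul_nonneg hp0 (sq_nonneg z.re), mul_nonneg hp0 (sq_nonneg z.im)]
      · ring
  · -- 5/9 < p → ¬ PSD : use the test vector e₀₁ − e₁₀
    intro hp h
    have := h.dotProduct_mulVec_nonneg (fun q => if q = (0, 1) then 1 else if q = (1, 0) then -1 else 0)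
    simp only [dotProduct, mulVec, Fintype.sum_prod_type, Fin.sum_univ_two, ptranspose,
      Matrix.of_apply, Matrix.smul_apply, Matrix.add_apply, Matrix.sub_apply, Matrix.one_apply,
      kroneckerMap_apply, pauli, Pi.star_apply] at this
    simp only [Matrix.cons_val', Matrix.cons_val_zero, Matrix.cons_val_one, Matrix.cons_val_two, Matrix.tail_cons, Matrix.head_cons,
      Matrix.empty_val', Matrix.cons_val_fin_one, Matrix.head_fin_const] at this
    norm_num [Prod.ext_iff, Fin.ext_iff] at this
    rw [Complex.le_def] at this
    simp only [Complex.add_re, Complex.mul_re, Complex.mul_im, Complex.add_im, Complex.conj_re,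
      Complex.conj_im, Complex.ofReal_re, Complex.ofReal_im, Complex.zero_re, Complex.zero_im,
      Complex.one_re, Complex.one_im, Complex.neg_re, Complex.neg_im, Complex.sub_re,
      Complex.sub_im] at this
    norm_num at this
    linarith
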